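/- Let π* : (E,C) → (F,D) be a locally complete map of finite bipartite separated graphs, given by a complete subobject (G,L) of (F,D) and a graph homomorphism π = (π⁰,π¹) : G → E. Define (G₁,L¹) by: G₁^{0,0} = G^{0,1}; G₁^{0,1} is the set of vertices v(x₁,…,x_l) of F₁^{0,1} whose underlying vertex u lies in G^{0,0}; L¹_w = {X(x) : x ∈ s_G⁻¹(w)} for w ∈ G₁^{0,0}; and G₁¹ is the union of the sets in L¹. For u ∈ G^{0,0} write D_u = {X₁,…,X_l} with L_u = {X₁,…,X_k}, so that C_{π⁰(u)} = {π¹(X₁),…,π¹(X_k)}. Define ρ⁰(w) = π⁰(w) for w ∈ G₁^{0,0} = G^{0,1}; ρ⁰(v(x₁,…,x_k,x_{k+1},…,x_l)) = v(π¹(x₁),…,π¹(x_k)); and ρ¹(α^{xᵢ}(x₁,…,x̂ᵢ,…,x_k,x_{k+1},…,x_l)) = α^{π¹(xᵢ)}(π¹(x₁),…,π¹(xᵢ)^,…,π¹(x_k)) for 1 ≤ i ≤ k. Then (G₁,L¹) is a complete subobject of (F₁,D¹), ρ = (ρ⁰,ρ¹) is a well-defined graph homomorphism G₁ → E₁, and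 ρ* is a locally complete map (E₁,C¹) → (F₁,D¹), i.e., it satisfies conditions (1)–(4) of the definition of locally complete map. -/

import Mathlib

/-- A bipartite separated graph: all edges go from a vertex of `V1 = E^{0,1}` to a
vertex of `V0 = E^{0,0}`, and `C v` is a family of subsets of `r⁻¹(v)`. -/
structure BSG where
  V0 : Type
  V1 : Type
  E : Type
  s : E → V1
  r : E → V0
  C : V0 → Set (Set E)

/-- Being a finite bipartite separated graph. -/
structure BSG.Valid (G : BSG) : Prop where
  finV0 : Finite G.V0
  finV1 : Finite G.V1
  finE : Finite G.E
  mem_r : ∀ v X, X ∈ G.C v → ∀ e ∈ X, G.r e = v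
  nonempty_class : ∀ v X, X ∈ G.C v → X.Nonempty
  disj : ∀ v, (G.C v).PairwiseDisjoint id
  cover : ∀ e : G.E, ∃ X ∈ G.C (G.r e), e ∈ X
  C_nonempty : ∀ v : G.V0, (G.C v).Nonempty
  s_surj : Function.Surjective G.s

/-- The set of new vertices `v(x₁,…,x_{k_u})` of the graph `(E₁, C¹)`: pairs of a
vertex `u ∈ E^{0,0}` and a choice of one edge from each class of `C_u`. -/
def BSG.NewVert (G : BSG) : Type :=
  Σ u : G.V0, (X : {X : Set G.E // X ∈ G.C u}) → ↥X.1

/-- The set of edges of `(E₁, C¹)`: an edge `α^{xᵢ}(x₁,…,x̂ᵢ,…,x_{k_u})` is encoded as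
the pair of its source vertex `v(x₁,…,x_{k_u})` and the class containing `xᵢ`. -/
def BSG.NewEdge (G : BSG) : Type :=
  Σ p : G.NewVert, {X : Set G.E // X ∈ G.C p.1}

/-- The edge `xᵢ ∈ E¹` attached to an edge `α^{xᵢ}(…)` of `(E₁,C¹)`. -/
def BSG.edgeOf (G : BSG) (e : G.NewEdge) : G.E := (e.1.2 e.2 : G.E)

/-- The class `X(x) = {α^{x}(…)} ⊆ E₁¹` attached to an edge `x ∈ E¹`. -/
def BSG.Xof (G : BSG) (x : G.E) : Set G.NewEdge := {e | G.edgeOf e = x}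

/-- The finite bipartite separated graph `(E₁, C¹)` associated to `(E,C)`:
`E₁^{0,0} = E^{0,1}`, `E₁^{0,1}` is the set of new vertices `v(x₁,…,x_{k_u})`, the
edge `α^{xᵢ}(…)` has source `v(x₁,…,x_{k_u})` and range `s(xᵢ)`, and
`C¹_w = {X(x) : x ∈ s⁻¹(w)}`. -/
def BSG.next (G : BSG) : BSG where
  V0 := G.V1
  V1 := G.NewVert
  E := G.NewEdge
  s := fun e => e.1
  r := fun e => G.s (G.edgeOf e)
  C := fun w => {S | ∃ x : G.E, G.s x = w ∧ S = G.Xof x}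

/-- The set of edges of the complete subobject determined by the family of classes
`L`: the union of all classes belonging to some `L v`. -/
def edgeSetOf (F : BSG) (L : F.V0 → Set (Set F.E)) : Set F.E :=
  {x | ∃ v, ∃ Y ∈ L v, x ∈ Y}

/-- `(G,L)`, given by the vertex sets `SV0 ⊆ F^{0,0}`, `SV1 ⊆ F^{0,1}` and the family
of classes `L ⊆ D`, is a complete subobject of the finite bipartite separated graph
`(F,D)` (in particular it is itself a finite bipartite separated graph). -/
structure CompleteSub (F : BSG) (SV0 : Set F.V0) (SV1 : Set F.V1)
    (L : F.V0 → Set (Set F.E)) : Prop where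
  sub : ∀ v, L v ⊆ F.C v
  range_in : ∀ v, (L v).Nonempty → v ∈ SV0
  r_nonempty : ∀ v ∈ SV0, (L v).Nonempty
  edges_s : ∀ v, ∀ Y ∈ L v, ∀ x ∈ Y, F.s x ∈ SV1
  s_nonempty : ∀ w ∈ SV1, ∃ x ∈ edgeSetOf F L, F.s x = w

/-- A locally complete map `π* : (E,C) → (F,D)`: a complete subobject `(G,L)` of
`(F,D)` (given by `SV0`, `SV1`, `L`) together with a graph homomorphism
`π = (π⁰,π¹) : G → E`, encoded by (arbitrary) total extensions `π0`, `π1`, `πe`, such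
that: π is a graph homomorphism on `G`; (1) `π⁰` and `π¹` are surjective;
(2) `π¹(X) ∈ C` for each `X ∈ L`; (3) `π¹` restricts to a bijection
`s_G⁻¹(w) → s_E⁻¹(π⁰(w))` for each `w ∈ G^{0,1}`; (4) `π̃ : L → C` restricts to a
bijection `L_v → C_{π⁰(v)}` for each `v ∈ G^{0,0}`. -/
structure IsLocallyComplete (Eg F : BSG) (SV0 : Set F.V0) (SV1 : Set F.V1)
    (L : F.V0 → Set (Set F.E))
    (π0 : F.V0 → Eg.V0) (π1 : F.V1 → Eg.V1) (πe : F.E → Eg.E) : Prop where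
  hom_s : ∀ x ∈ edgeSetOf F L, Eg.s (πe x) = π1 (F.s x)
  hom_r : ∀ x ∈ edgeSetOf F L, Eg.r (πe x) = π0 (F.r x)
  surj0 : ∀ v : Eg.V0, ∃ u ∈ SV0, π0 u = v
  surj1 : ∀ w : Eg.V1, ∃ u ∈ SV1, π1 u = w
  surjE : ∀ y : Eg.E, ∃ x ∈ edgeSetOf F L, πe x = y
  cls : ∀ v, ∀ Y ∈ L v, πe '' Y ∈ Eg.C (π0 v)
  fib : ∀ w ∈ SV1,
    Set.BijOn πe {x | x ∈ edgeSetOf F L ∧ F.s x = w} {y : Eg.E | Eg.s y = π1 w}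
  clsbij : ∀ v ∈ SV0, Set.BijOn (fun Y => πe '' Y) (L v) (Eg.C (π0 v))

section Aux

variable (Eg F : BSG) (SV0 : Set F.V0) (SV1 : Set F.V1) (L : F.V0 → Set (Set F.E))
  (π0 : F.V0 → Eg.V0) (π1 : F.V1 → Eg.V1) (πe : F.E → Eg.E)

open Classical in
/-- The map `ρ⁰` on new vertices. -/
noncomputable def rhoNew (hE : Eg.Valid) (p : F.NewVert) : Eg.NewVert :=
  ⟨π0 p.1, fun Y =>
    if h : ∃ X : {X : Set F.E // X ∈ F.C p.1}, X.1 ∈ L p.1 ∧ πe '' X.1 = Y.1 then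
      ⟨πe (p.2 h.choose : F.E),
        h.choose_spec.2.subset (Set.mem_image_of_mem πe (p.2 h.choose).2)⟩
    else
      ⟨(hE.nonempty_class (π0 p.1) Y.1 Y.2).choose,
        (hE.nonempty_class (π0 p.1) Y.1 Y.2).choose_spec⟩⟩

open Classical in
/-- The map `ρ¹` on new edges. -/
noncomputable def rhoE (hE : Eg.Valid) (e : F.NewEdge) : Eg.NewEdge :=
  ⟨rhoNew Eg F L π0 πe hE e.1,
    if h : πe '' e.2.1 ∈ Eg.C (π0 e.1.1) then ⟨πe '' e.2.1, h⟩
    else ⟨(hE.C_nonempty (π0 e.1.1)).choose, (hE.C_nonempty (π0 e.1.1)).choose_spec⟩⟩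

lemma newVert_ext {G : BSG} {q q' : G.NewVert} (h1 : q.1 = q'.1)
    (h2 : ∀ (Y : Set G.E) (hY : Y ∈ G.C q.1) (hY' : Y ∈ G.C q'.1),
      (q.2 ⟨Y, hY⟩ : G.E) = (q'.2 ⟨Y, hY'⟩ : G.E)) : q = q' := by
  obtain ⟨u, f⟩ := q; obtain ⟨u', f'⟩ := q'
  dsimp at h1; subst h1
  exact congrArg _ (funext fun Y => Subtype.ext (h2 Y.1 Y.2 Y.2))

lemma newEdge_ext {G : BSG} {β β' : G.NewEdge} (h1 : β.1 = β'.1)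
    (h2 : β.2.1 = β'.2.1) : β = β' := by
  obtain ⟨p, X⟩ := β; obtain ⟨p', X'⟩ := β'
  dsimp at h1; subst h1
  exact congrArg _ (Subtype.ext h2)

lemma rhoNew_spec (hE : Eg.Valid)
    (hπ : IsLocallyComplete Eg F SV0 SV1 L π0 π1 πe)
    (p : F.NewVert) (hp : p.1 ∈ SV0)
    (X : {X : Set F.E // X ∈ F.C p.1}) (hX : X.1 ∈ L p.1)
    (Y : {Y : Set Eg.E // Y ∈ Eg.C (π0 p.1)}) (hY : Y.1 = πe '' X.1) :
    ((rhoNew Eg F L π0 πe hE p).2 Y : Eg.E) = πe (p.2 X : F.E) := by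
  have h : ∃ X : {X : Set F.E // X ∈ F.C p.1}, X.1 ∈ L p.1 ∧ πe '' X.1 = Y.1 :=
    ⟨X, hX, hY.symm⟩
  have hc := h.choose_spec
  have hcx : h.choose = X := by
    apply Subtype.ext
    exact (hπ.clsbij p.1 hp).2.1 hc.1 hX
      (by show πe '' (h.choose.1 : Set F.E) = πe '' X.1; rw [hc.2, hY])
  simp only [rhoNew, dif_pos h]
  exact congrArg (fun Z => πe (p.2 Z : F.E)) hcx

lemma rhoE_spec (hE : Eg.Valid)
    (hπ : IsLocallyComplete Eg F SV0 SV1 L π0 π1 πe)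
    (e : F.NewEdge) (he : e.2.1 ∈ L e.1.1) :
    (rhoE Eg F L π0 πe hE e).1 = rhoNew Eg F L π0 πe hE e.1 ∧
      (rhoE Eg F L π0 πe hE e).2.1 = πe '' e.2.1 := by
  refine ⟨rfl, ?_⟩
  have h : πe '' e.2.1 ∈ Eg.C (π0 e.1.1) := hπ.cls _ _ he
  simp only [rhoE, dif_pos h]

lemma rhoE_edge (hE : Eg.Valid)
    (hsub : CompleteSub F SV0 SV1 L)
    (hπ : IsLocallyComplete Eg F SV0 SV1 L π0 π1 πe)
    (α : F.NewEdge) (hα : α.2.1 ∈ L α.1.1) :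
    Eg.edgeOf (rhoE Eg F L π0 πe hE α) = πe (F.edgeOf α) := by
  have hp : α.1.1 ∈ SV0 := hsub.range_in _ ⟨_, hα⟩
  exact rhoNew_spec Eg F SV0 SV1 L π0 π1 πe hE hπ α.1 hp α.2 hα
    (rhoE Eg F L π0 πe hE α).2
    (rhoE_spec Eg F SV0 SV1 L π0 π1 πe hE hπ α hα).2

lemma memM_class (hF : F.Valid) (hsub : CompleteSub F SV0 SV1 L)
    {x : F.E} (hx : x ∈ edgeSetOf F L) {α : F.NewEdge} (hα : F.edgeOf α = x) :
    α.2.1 ∈ L α.1.1 := by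
  obtain ⟨v, Y, hYL, hxY⟩ := hx
  have hYC : Y ∈ F.C v := hsub.sub v hYL
  have h1 : F.r x = v := hF.mem_r v Y hYC x hxY
  have hmem : F.edgeOf α ∈ α.2.1 := (α.1.2 α.2).2
  have h2 : F.r x = α.1.1 := by
    rw [← hα]; exact hF.mem_r α.1.1 α.2.1 α.2.2 _ hmem
  have hv : v = α.1.1 := h1.symm.trans h2
  have hαC : α.2.1 ∈ F.C v := by rw [hv]; exact α.2.2
  have hmem' : x ∈ α.2.1 := hα ▸ hmem
  have hYα : Y = α.2.1 :=
    (hF.disj v).elim hYC hαC (Set.not_disjoint_iff.mpr ⟨x, hxY, hmem'⟩)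
  rw [← hYα, ← hv]; exact hYL

lemma mem_M_of {α : F.NewEdge} (h : α.2.1 ∈ L α.1.1) :
    α ∈ edgeSetOf F.next (fun w => {S | ∃ x ∈ edgeSetOf F L, F.s x = w ∧ S = F.Xof x}) := by
  have hmem : F.edgeOf α ∈ α.2.1 := (α.1.2 α.2).2
  exact ⟨F.s (F.edgeOf α), F.Xof (F.edgeOf α),
    ⟨F.edgeOf α, ⟨α.1.1, α.2.1, h, hmem⟩, rfl, rfl⟩, rfl⟩

lemma M_of_mem (hF : F.Valid) (hsub : CompleteSub F SV0 SV1 L) {α : F.NewEdge}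
    (hα : α ∈ edgeSetOf F.next
      (fun w => {S | ∃ x ∈ edgeSetOf F L, F.s x = w ∧ S = F.Xof x})) :
    α.2.1 ∈ L α.1.1 ∧ F.edgeOf α ∈ edgeSetOf F L := by
  obtain ⟨w, S, ⟨x, hxE, hsx, rfl⟩, hαS⟩ := hα
  have hα' : F.edgeOf α = x := hαS
  exact ⟨memM_class F SV0 SV1 L hF hsub hxE hα', hα' ▸ hxE⟩

open Classical in
lemma exists_newEdge (G : BSG) (hG : G.Valid) (y : G.E) :
    ∃ β : G.NewEdge, G.edgeOf β = y := by
  obtain ⟨Y₀, hY₀, hyY₀⟩ := hG.cover y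
  refine ⟨⟨⟨G.r y, fun Y => if h : y ∈ Y.1 then ⟨y, h⟩ else
    ⟨(hG.nonempty_class (G.r y) Y.1 Y.2).choose,
      (hG.nonempty_class (G.r y) Y.1 Y.2).choose_spec⟩⟩, ⟨Y₀, hY₀⟩⟩, ?_⟩
  simp only [BSG.edgeOf, dif_pos hyY₀]

open Classical in
lemma lift_lemma (hE : Eg.Valid) (hF : F.Valid)
    (hsub : CompleteSub F SV0 SV1 L)
    (hπ : IsLocallyComplete Eg F SV0 SV1 L π0 π1 πe)
    (v : F.V0) (hv : v ∈ SV0)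
    (f : (Y : {Y : Set Eg.E // Y ∈ Eg.C (π0 v)}) → ↥Y.1)
    (X₀ : {X : Set F.E // X ∈ F.C v}) (hX₀ : X₀.1 ∈ L v)
    (x : F.E) (hx : x ∈ X₀.1)
    (hfx : ∀ hY : πe '' X₀.1 ∈ Eg.C (π0 v), (f ⟨πe '' X₀.1, hY⟩ : Eg.E) = πe x) :
    ∃ g : (X : {X : Set F.E // X ∈ F.C v}) → ↥X.1,
      (g X₀ : F.E) = x ∧ rhoNew Eg F L π0 πe hE ⟨v, g⟩ = ⟨π0 v, f⟩ := by
  have claim : ∀ X : {X : Set F.E // X ∈ F.C v}, ∃ y : ↥X.1,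
      (X = X₀ → (y : F.E) = x) ∧
      (X.1 ∈ L v → ∀ hY : πe '' X.1 ∈ Eg.C (π0 v),
        πe (y : F.E) = (f ⟨πe '' X.1, hY⟩ : Eg.E)) := by
    intro X
    by_cases h0 : X = X₀
    · subst h0
      exact ⟨⟨x, hx⟩, fun _ => rfl, fun _ hY => (hfx hY).symm⟩
    · by_cases hXL : X.1 ∈ L v
      · have hY' : πe '' X.1 ∈ Eg.C (π0 v) := hπ.cls v X.1 hXL
        obtain ⟨y, hyX, hy⟩ := (f ⟨πe '' X.1, hY'⟩).2
        exact ⟨⟨y, hyX⟩, fun h => absurd h h0, fun _ hY => hy⟩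
      · obtain ⟨y, hy⟩ := hF.nonempty_class v X.1 X.2
        exact ⟨⟨y, hy⟩, fun h => absurd h h0, fun h => absurd h hXL⟩
  choose g hg1 hg2 using claim
  refine ⟨g, hg1 X₀ rfl, ?_⟩
  refine newVert_ext (q := rhoNew Eg F L π0 πe hE ⟨v, g⟩) (q' := ⟨π0 v, f⟩) rfl ?_
  intro Y hY hY'
  obtain ⟨Xs, hXsL, hXsim⟩ := (hπ.clsbij v hv).surjOn hY'
  have hXsim : πe '' Xs = Y := hXsim
  have hXsC : Xs ∈ F.C v := hsub.sub v hXsL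
  have h1 := rhoNew_spec Eg F SV0 SV1 L π0 π1 πe hE hπ ⟨v, g⟩ hv ⟨Xs, hXsC⟩ hXsL
    ⟨Y, hY⟩ hXsim.symm
  have hYC : πe '' Xs ∈ Eg.C (π0 v) := by rw [hXsim]; exact hY'
  have h2 := hg2 ⟨Xs, hXsC⟩ hXsL hYC
  have h3 : (⟨πe '' Xs, hYC⟩ : {Y : Set Eg.E // Y ∈ Eg.C (π0 v)}) = ⟨Y, hY'⟩ :=
    Subtype.ext hXsim
  exact h1.trans (h2.trans (congrArg (fun Z => (f Z : Eg.E)) h3))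

lemma rhoE_image (hE : Eg.Valid) (hF : F.Valid)
    (hsub : CompleteSub F SV0 SV1 L)
    (hπ : IsLocallyComplete Eg F SV0 SV1 L π0 π1 πe)
    {x : F.E} (hx : x ∈ edgeSetOf F L) :
    rhoE Eg F L π0 πe hE '' F.Xof x = Eg.Xof (πe x) := by
  apply Set.Subset.antisymm
  · rintro _ ⟨α, hα, rfl⟩
    have hcl : α.2.1 ∈ L α.1.1 := memM_class F SV0 SV1 L hF hsub hx hα
    show Eg.edgeOf (rhoE Eg F L π0 πe hE α) = πe x
    rw [rhoE_edge Eg F SV0 SV1 L π0 π1 πe hE hsub hπ α hcl, hα]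
  · rintro β hβ
    obtain ⟨v, Y₀, hY₀L, hxY₀⟩ := hx
    have hv : v ∈ SV0 := hsub.range_in v ⟨Y₀, hY₀L⟩
    have hY₀C : Y₀ ∈ F.C v := hsub.sub v hY₀L
    have hrx : F.r x = v := hF.mem_r v Y₀ hY₀C x hxY₀
    obtain ⟨⟨u, fq⟩, Yc⟩ := β
    have hβ' : (fq Yc : Eg.E) = πe x := hβ
    have hmem : πe x ∈ Yc.1 := hβ' ▸ (fq Yc).2
    have hu : u = π0 v := by
      have h1 : Eg.r (πe x) = u := hE.mem_r u Yc.1 Yc.2 _ hmem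
      have h2 : Eg.r (πe x) = π0 (F.r x) := hπ.hom_r x ⟨v, Y₀, hY₀L, hxY₀⟩
      rw [← h1, h2, hrx]
    subst hu
    have hC : πe '' Y₀ ∈ Eg.C (π0 v) := hπ.cls v Y₀ hY₀L
    have hYc : Yc.1 = πe '' Y₀ :=
      (hE.disj (π0 v)).elim Yc.2 hC
        (Set.not_disjoint_iff.mpr ⟨πe x, hmem, Set.mem_image_of_mem _ hxY₀⟩)
    obtain ⟨g, hg1, hg2⟩ := lift_lemma Eg F SV0 SV1 L π0 π1 πe hE hF hsub hπ v hv fq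
      ⟨Y₀, hY₀C⟩ hY₀L x hxY₀
      (fun hY => by
        have h3 : (⟨πe '' Y₀, hY⟩ : {Y : Set Eg.E // Y ∈ Eg.C (π0 v)}) = Yc :=
          Subtype.ext hYc.symm
        rw [h3]; exact hβ')
    refine ⟨⟨⟨v, g⟩, ⟨Y₀, hY₀C⟩⟩, hg1, ?_⟩
    apply newEdge_ext
    · exact hg2
    · have := (rhoE_spec Eg F SV0 SV1 L π0 π1 πe hE hπ ⟨⟨v, g⟩, ⟨Y₀, hY₀C⟩⟩ hY₀L).2
      rw [this, ← hYc]

end Aux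
theorem stmt13 (Eg F : BSG) (hE : Eg.Valid) (hF : F.Valid)
    (SV0 : Set F.V0) (SV1 : Set F.V1) (L : F.V0 → Set (Set F.E))
    (hsub : CompleteSub F SV0 SV1 L)
    (π0 : F.V0 → Eg.V0) (π1 : F.V1 → Eg.V1) (πe : F.E → Eg.E)
    (hπ : IsLocallyComplete Eg F SV0 SV1 L π0 π1 πe) :
    -- (G₁, L¹) is a complete subobject of (F₁, D¹)
    CompleteSub F.next (SV1 : Set F.next.V0)
      ({p : F.NewVert | p.1 ∈ SV0} : Set F.next.V1)
      (fun w => {S | ∃ x ∈ edgeSetOf F L, F.s x = w ∧ S = F.Xof x}) ∧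
    -- ρ is well defined and is a locally complete map (E₁,C¹) → (F₁,D¹)
    ∃ (ρnew : F.NewVert → Eg.NewVert) (ρe : F.NewEdge → Eg.NewEdge),
      -- defining formula for ρ⁰ on new vertices
      (∀ p : F.NewVert, p.1 ∈ SV0 →
        (ρnew p).1 = π0 p.1 ∧
        ∀ (X : {X : Set F.E // X ∈ F.C p.1}), X.1 ∈ L p.1 →
          ∀ (Y : {Y : Set Eg.E // Y ∈ Eg.C (ρnew p).1}), Y.1 = πe '' X.1 →
            ((ρnew p).2 Y : Eg.E) = πe (p.2 X : F.E)) ∧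
      -- defining formula for ρ¹
      (∀ e : F.NewEdge, e.2.1 ∈ L e.1.1 →
        (ρe e).1 = ρnew e.1 ∧ (ρe e).2.1 = πe '' e.2.1) ∧
      -- ρ* is a locally complete map (in particular ρ is a graph homomorphism)
      IsLocallyComplete Eg.next F.next (SV1 : Set F.next.V0)
        ({p : F.NewVert | p.1 ∈ SV0} : Set F.next.V1)
        (fun w => {S | ∃ x ∈ edgeSetOf F L, F.s x = w ∧ S = F.Xof x})
        π1 ρnew ρe := by
  constructor
  · constructor
    · rintro w S ⟨x, _, hsx, hS⟩
      exact ⟨x, hsx, hS⟩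
    · rintro w ⟨S, x, ⟨v, Y, hYL, hxY⟩, hsx, hS⟩
      rw [← hsx]; exact hsub.edges_s v Y hYL x hxY
    · intro w hw
      obtain ⟨x, hxE, hsx⟩ := hsub.s_nonempty w hw
      exact ⟨F.Xof x, x, hxE, hsx, rfl⟩
    · rintro w S ⟨x, hxE, hsx, rfl⟩ α hα
      have hα' : F.edgeOf α = x := hα
      have hcl := memM_class F SV0 SV1 L hF hsub hxE hα'
      exact hsub.range_in α.1.1 ⟨α.2.1, hcl⟩
    · intro p hp
      obtain ⟨X, hX⟩ := hsub.r_nonempty p.1 hp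
      exact ⟨⟨p, ⟨X, hsub.sub p.1 hX⟩⟩, mem_M_of F L hX, rfl⟩
  · refine ⟨rhoNew Eg F L π0 πe hE, rhoE Eg F L π0 πe hE, ?_, ?_, ?_⟩
    · intro p hp
      exact ⟨rfl, fun X hX Y hY =>
        rhoNew_spec Eg F SV0 SV1 L π0 π1 πe hE hπ p hp X hX Y hY⟩
    · intro e he
      exact rhoE_spec Eg F SV0 SV1 L π0 π1 πe hE hπ e he
    · have hsurj1 : ∀ q : Eg.NewVert,
          ∃ p : F.NewVert, p.1 ∈ SV0 ∧ rhoNew Eg F L π0 πe hE p = q := by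
        intro q
        obtain ⟨u, f⟩ := q
        obtain ⟨v, hv, hu⟩ := hπ.surj0 u
        subst hu
        obtain ⟨Y₀, hY₀⟩ := hsub.r_nonempty v hv
        have hY₀C : Y₀ ∈ F.C v := hsub.sub v hY₀
        have hC : πe '' Y₀ ∈ Eg.C (π0 v) := hπ.cls v Y₀ hY₀
        obtain ⟨x, hxY₀, hxv⟩ := (f ⟨πe '' Y₀, hC⟩).2
        obtain ⟨g, hg1, hg2⟩ := lift_lemma Eg F SV0 SV1 L π0 π1 πe hE hF hsub hπ v hv f
          ⟨Y₀, hY₀C⟩ hY₀ x hxY₀ (fun hY => hxv.symm)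
        exact ⟨⟨v, g⟩, hv, hg2⟩
      refine { hom_s := ?_, hom_r := ?_, surj0 := ?_, surj1 := ?_, surjE := ?_,
               cls := ?_, fib := ?_, clsbij := ?_ }
      · exact fun α _ => rfl
      · intro α hα
        obtain ⟨hcl, hxE⟩ := M_of_mem F SV0 SV1 L hF hsub hα
        show Eg.s (Eg.edgeOf (rhoE Eg F L π0 πe hE α)) = π1 (F.s (F.edgeOf α))
        rw [rhoE_edge Eg F SV0 SV1 L π0 π1 πe hE hsub hπ α hcl]
        exact hπ.hom_s _ hxE
      · exact fun v => hπ.surj1 v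
      · intro q
        obtain ⟨p, hp, hq⟩ := hsurj1 q
        exact ⟨p, hp, hq⟩
      · intro β
        obtain ⟨q, Yc⟩ := β
        obtain ⟨p, hp, hq⟩ := hsurj1 q
        subst hq
        have hYc2 : Yc.1 ∈ Eg.C (π0 p.1) := Yc.2
        obtain ⟨X, hXL, hXim⟩ := (hπ.clsbij p.1 hp).surjOn hYc2
        have hXim : πe '' X = Yc.1 := hXim
        have hXC : X ∈ F.C p.1 := hsub.sub p.1 hXL
        refine ⟨⟨p, ⟨X, hXC⟩⟩, mem_M_of F L hXL, newEdge_ext rfl ?_⟩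
        rw [(rhoE_spec Eg F SV0 SV1 L π0 π1 πe hE hπ ⟨p, ⟨X, hXC⟩⟩ hXL).2]
        exact hXim
      · rintro w S ⟨x, hxE, hsx, rfl⟩
        exact ⟨πe x, by rw [hπ.hom_s x hxE, hsx],
          rhoE_image Eg F SV0 SV1 L π0 π1 πe hE hF hsub hπ hxE⟩
      · intro p hp
        refine ⟨?_, ?_, ?_⟩
        · rintro α ⟨hαM, hαs⟩
          show (rhoE Eg F L π0 πe hE α).1 = rhoNew Eg F L π0 πe hE p
          show rhoNew Eg F L π0 πe hE α.1 = rhoNew Eg F L π0 πe hE p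
          rw [show α.1 = p from hαs]
        · rintro α ⟨hαM, hαs⟩ α' ⟨hαM', hαs'⟩ heq
          obtain ⟨hcl, _⟩ := M_of_mem F SV0 SV1 L hF hsub hαM
          obtain ⟨hcl', _⟩ := M_of_mem F SV0 SV1 L hF hsub hαM'
          obtain ⟨p1, X⟩ := α
          obtain ⟨p1', X'⟩ := α'
          have hαs : p1 = p := hαs
          have hαs' : p1' = p := hαs'
          subst hαs
          subst hαs'
          have h1 := (rhoE_spec Eg F SV0 SV1 L π0 π1 πe hE hπ ⟨p1', X⟩ hcl).2
          have h2 := (rhoE_spec Eg F SV0 SV1 L π0 π1 πe hE hπ ⟨p1', X'⟩ hcl').2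
          have him : πe '' X.1 = πe '' X'.1 := by rw [← h1, ← h2, heq]
          have hX : X.1 = X'.1 := (hπ.clsbij p1'.1 hp).2.1 hcl hcl' him
          exact congrArg _ (Subtype.ext hX)
        · rintro ⟨q, Yc⟩ hβ
          have hq : q = rhoNew Eg F L π0 πe hE p := hβ
          subst hq
          have hYc2 : Yc.1 ∈ Eg.C (π0 p.1) := Yc.2
          obtain ⟨X, hXL, hXim⟩ := (hπ.clsbij p.1 hp).surjOn hYc2
          have hXim : πe '' X = Yc.1 := hXim
          have hXC : X ∈ F.C p.1 := hsub.sub p.1 hXL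
          refine ⟨⟨p, ⟨X, hXC⟩⟩, ⟨mem_M_of F L hXL, rfl⟩, newEdge_ext rfl ?_⟩
          rw [(rhoE_spec Eg F SV0 SV1 L π0 π1 πe hE hπ ⟨p, ⟨X, hXC⟩⟩ hXL).2]
          exact hXim
      · intro w hw
        refine ⟨?_, ?_, ?_⟩
        · rintro S ⟨x, hxE, hsx, rfl⟩
          exact ⟨πe x, by rw [hπ.hom_s x hxE, hsx],
            rhoE_image Eg F SV0 SV1 L π0 π1 πe hE hF hsub hπ hxE⟩
        · rintro S ⟨x, hxE, hsx, rfl⟩ S' ⟨x', hxE', hsx', rfl⟩ him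
          have him' : Eg.Xof (πe x) = Eg.Xof (πe x') := by
            rw [← rhoE_image Eg F SV0 SV1 L π0 π1 πe hE hF hsub hπ hxE,
              ← rhoE_image Eg F SV0 SV1 L π0 π1 πe hE hF hsub hπ hxE']
            exact him
          obtain ⟨β, hβ⟩ := exists_newEdge Eg hE (πe x)
          have hmem : β ∈ Eg.Xof (πe x) := hβ
          rw [him'] at hmem
          have hpe : πe x = πe x' := hβ.symm.trans hmem
          have hxx : x = x' := (hπ.fib w hw).2.1 ⟨hxE, hsx⟩ ⟨hxE', hsx'⟩ hpe
          rw [hxx]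
        · rintro T ⟨y, hys, rfl⟩
          obtain ⟨x, hx, hxy⟩ := (hπ.fib w hw).surjOn (show Eg.s y = π1 w from hys)
          obtain ⟨hxE, hsx⟩ := hx
          refine ⟨F.Xof x, ⟨x, hxE, hsx, rfl⟩, ?_⟩
          show rhoE Eg F L π0 πe hE '' F.Xof x = Eg.Xof y
          rw [rhoE_image Eg F SV0 SV1 L π0 π1 πe hE hF hsub hπ hxE, hxy]
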